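/- Let d ≥ 1 and 1 ≤ k ≤ d be integers and let x ∈ ℝ^d. Then the expected squared Euclidean error of the scaled random sparsifier satisfies the exact identity (1 / C(d,k)) · Σ_{ω ⊆ {1,…,d}, |ω| = k} ‖(d/k)·mask_ω(x) − x‖² = (d/k − 1)·‖x‖², where ‖·‖ is the Euclidean norm on ℝ^d. -/

import Mathlib

/-- The masked vector `mask ω x` has `j`-th coordinate `x j` if `j ∈ ω` and `0` otherwise. -/
def mask {d : ℕ} (ω : Finset (Fin d)) (x : EuclideanSpace ℝ (Fin d)) :
    EuclideanSpace ℝ (Fin d) :=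
  WithLp.toLp 2 (fun j => if j ∈ ω then x j else 0)

lemma count_mem_powersetCard (d k : ℕ) (hk : 1 ≤ k) (a : Fin d) :
    ((Finset.powersetCard k (Finset.univ : Finset (Fin d))).filter (fun ω => a ∈ ω)).card
      = (d - 1).choose (k - 1) := by
  have : ((Finset.powersetCard k (Finset.univ : Finset (Fin d))).filter
      (fun ω => a ∈ ω)).card
      = (Finset.powersetCard (k - 1) ((Finset.univ : Finset (Fin d)).erase a)).card := by
    apply Finset.card_nbij' (fun ω => ω.erase a) (fun ω => insert a ω)
    · intro ω hω
      simp only [Finset.mem_coe, Finset.mem_filter, Finset.mem_powersetCard] at hω ⊢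
      refine ⟨fun j hj => Finset.mem_erase.2 ⟨(Finset.mem_erase.1 hj).1, Finset.mem_univ _⟩, ?_⟩
      rw [Finset.card_erase_of_mem hω.2, hω.1.2]
    · intro ω hω
      simp only [Finset.mem_coe, Finset.mem_filter, Finset.mem_powersetCard] at hω ⊢
      have ha : a ∉ ω := fun h => (Finset.mem_erase.1 (hω.1 h)).1 rfl
      refine ⟨⟨fun j _ => Finset.mem_univ _, ?_⟩, Finset.mem_insert_self _ _⟩
      rw [Finset.card_insert_of_notMem ha, hω.2, Nat.sub_add_cancel hk]
    · intro ω hω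
      simp only [Finset.mem_coe, Finset.mem_filter] at hω
      exact Finset.insert_erase hω.2
    · intro ω hω
      simp only [Finset.mem_coe, Finset.mem_powersetCard] at hω
      have ha : a ∉ ω := fun h => (Finset.mem_erase.1 (hω.1 h)).1 rfl
      exact Finset.erase_insert ha
  rw [this, Finset.card_powersetCard, Finset.card_erase_of_mem (Finset.mem_univ a),
    Finset.card_univ, Fintype.card_fin]

lemma choose_mul_eq (d k : ℕ) (hd : 1 ≤ d) (hk : 1 ≤ k) :
    d * (d - 1).choose (k - 1) = d.choose k * k := by
  have h := Nat.add_one_mul_choose_eq (d - 1) (k - 1)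
  have h1 : d - 1 + 1 = d := Nat.succ_pred_eq_of_pos hd
  have h2 : k - 1 + 1 = k := Nat.succ_pred_eq_of_pos hk
  simp only [Nat.succ_eq_add_one, h1, h2] at h
  exact h

/-- The expected squared Euclidean error of the scaled random sparsifier:
`(1 / C(d,k)) · Σ_{|ω| = k} ‖(d/k)·mask_ω(x) − x‖² = (d/k − 1)·‖x‖²`. -/
theorem randk_scaled_error (d k : ℕ) (hd : 1 ≤ d) (hk1 : 1 ≤ k) (hkd : k ≤ d)
    (x : EuclideanSpace ℝ (Fin d)) :
    ((d.choose k : ℝ))⁻¹ *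
      ∑ ω ∈ Finset.powersetCard k (Finset.univ : Finset (Fin d)),
        ‖((d : ℝ) / k) • mask ω x - x‖ ^ 2 = ((d : ℝ) / k - 1) * ‖x‖ ^ 2 := by
  classical
  set c : ℝ := (d : ℝ) / k with hc
  have hnorm : ∀ y : EuclideanSpace ℝ (Fin d), ‖y‖ ^ 2 = ∑ j, (y j) ^ 2 := by
    intro y
    rw [EuclideanSpace.norm_eq, Real.sq_sqrt (by positivity)]
    simp [Real.norm_eq_abs, sq_abs]
  have hterm : ∀ ω ∈ Finset.powersetCard k (Finset.univ : Finset (Fin d)),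
      ‖c • mask ω x - x‖ ^ 2
        = ∑ j, (if j ∈ ω then (c - 1) ^ 2 else 1) * (x j) ^ 2 := by
    intro ω _
    rw [hnorm]
    apply Finset.sum_congr rfl
    intro j _
    have hj : (c • mask ω x - x) j = c * (mask ω x j) - x j := rfl
    rw [hj]
    by_cases h : j ∈ ω <;> simp [mask, h] <;> ring
  rw [Finset.sum_congr rfl hterm, Finset.sum_comm]
  have hmul := choose_mul_eq d k hd hk1
  have hle : (d - 1).choose (k - 1) ≤ d.choose k := by
    have h1 : d * (d - 1).choose (k - 1) ≤ d * d.choose k := by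
      calc d * (d - 1).choose (k - 1) = d.choose k * k := hmul
        _ ≤ d.choose k * d := Nat.mul_le_mul_left _ hkd
        _ = d * d.choose k := Nat.mul_comm _ _
    exact Nat.le_of_mul_le_mul_left h1 (by omega)
  have hcount : ∀ j : Fin d,
      ∑ ω ∈ Finset.powersetCard k (Finset.univ : Finset (Fin d)),
        (if j ∈ ω then (c - 1) ^ 2 else 1) * (x j) ^ 2
      = (((d - 1).choose (k - 1) : ℝ) * (c - 1) ^ 2
          + ((d.choose k : ℝ) - ((d - 1).choose (k - 1) : ℝ))) * (x j) ^ 2 := by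
    intro j
    rw [← Finset.sum_mul]
    congr 1
    rw [Finset.sum_ite, Finset.sum_const, Finset.sum_const,
      count_mem_powersetCard d k hk1 j]
    have hfn : ((Finset.powersetCard k (Finset.univ : Finset (Fin d))).filter
        (fun ω => ¬ j ∈ ω)).card = d.choose k - (d - 1).choose (k - 1) := by
      have h := Finset.card_filter_add_card_filter_not
        (s := Finset.powersetCard k (Finset.univ : Finset (Fin d)))
        (p := fun ω => j ∈ ω)
      rw [count_mem_powersetCard d k hk1 j, Finset.card_powersetCard, Finset.card_univ,
        Fintype.card_fin] at h
      omega
    rw [hfn]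
    simp only [nsmul_eq_mul, smul_eq_mul, Nat.cast_sub hle, mul_one]
  rw [Finset.sum_congr rfl (fun j _ => hcount j), ← Finset.mul_sum, hnorm x]
  set S : ℝ := ∑ j : Fin d, (x j) ^ 2
  set C1 : ℝ := ((d - 1).choose (k - 1) : ℝ)
  set Ck : ℝ := (d.choose k : ℝ)
  have hCk : Ck ≠ 0 := Nat.cast_ne_zero.2 (Nat.choose_pos hkd).ne'
  have hk0 : (k : ℝ) ≠ 0 := Nat.cast_ne_zero.2 (by omega)
  have hd0 : (d : ℝ) ≠ 0 := Nat.cast_ne_zero.2 (by omega)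
  have hrel : (d : ℝ) * C1 = Ck * k := by
    simp only [C1, Ck]
    exact_mod_cast hmul
  rw [hc]
  field_simp
  linear_combination (S * ((d : ℝ) - 2 * k)) * hrel
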